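/- Let K be a finite abstract simplicial complex, w : K → (0,∞), and φ_w(σ,τ) = C·w(σ)/w(τ) the induced weight. Let H be a hypergraph with ΔH = K and D_n the span of n-hyperedges. Then the map g_n sending Σ_k a_k σ_k to Σ_k (a_k / w(σ_k)) σ_k is a linear isomorphism from D_n ∩ Ker(∂_n) onto D_n ∩ Ker(∂_n^{φ_w}). -/

import Mathlib

/-- The `φ`-weighted simplicial boundary operator (boundary of a `0`-simplex is `0`). -/
noncomputable def wbd (𝕜 : Type*) [RCLike 𝕜] {V : Type*} [LinearOrder V]
    (phi : Finset V → Finset V → 𝕜) :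
    (Finset V →₀ 𝕜) →ₗ[𝕜] (Finset V →₀ 𝕜) :=
  Finsupp.lsum 𝕜 fun σ => LinearMap.toSpanSingleton 𝕜 _
    (if 2 ≤ σ.card then
        σ.sum fun v =>
          ((-1 : 𝕜) ^ (σ.filter (· < v)).card * phi σ (σ.erase v)) •
            Finsupp.single (σ.erase v) (1 : 𝕜)
      else 0)

/-- The span of the `m`-vertex hyperedges of `H` inside the chains. -/
noncomputable def hspan (𝕜 : Type*) [RCLike 𝕜] {V : Type*} [LinearOrder V]
    (H : Set (Finset V)) (m : ℕ) : Submodule 𝕜 (Finset V →₀ 𝕜) :=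
  Submodule.span 𝕜 {f | ∃ σ ∈ H, σ.card = m ∧ f = Finsupp.single σ 1}

/-- The rescaling map `g : Σ_k a_k σ_k ↦ Σ_k (a_k / w(σ_k)) σ_k` on chains. -/
noncomputable def gmap (𝕜 : Type*) [RCLike 𝕜] {V : Type*} [LinearOrder V]
    (w : Finset V → ℝ) : (Finset V →₀ 𝕜) →ₗ[𝕜] (Finset V →₀ 𝕜) :=
  Finsupp.lsum 𝕜 fun σ => LinearMap.toSpanSingleton 𝕜 _
    (((w σ : ℝ) : 𝕜)⁻¹ • Finsupp.single σ (1 : 𝕜))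

section Aux

variable {𝕜 V : Type*} [RCLike 𝕜] [LinearOrder V]

lemma gmap_single (w : Finset V → ℝ) (σ : Finset V) (a : 𝕜) :
    gmap 𝕜 w (Finsupp.single σ a) = a • (((w σ : ℝ) : 𝕜)⁻¹ • Finsupp.single σ 1) := by
  simp [gmap]

lemma gmap_apply (w : Finset V → ℝ) (f : Finset V →₀ 𝕜) (τ : Finset V) :
    gmap 𝕜 w f τ = ((w τ : ℝ) : 𝕜)⁻¹ * f τ := by
  induction f using Finsupp.induction_linear with
  | zero => simp
  | add f g hf hg => simp [hf, hg, mul_add]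
  | single σ a =>
    rw [gmap_single]
    rcases eq_or_ne σ τ with h | h
    · subst h; simp [mul_comm]
    · simp [Finsupp.single_apply, h]

lemma wbd_single (phi : Finset V → Finset V → 𝕜) (σ : Finset V) (a : 𝕜) :
    wbd 𝕜 phi (Finsupp.single σ a) =
      a • (if 2 ≤ σ.card then
        σ.sum fun v =>
          ((-1 : 𝕜) ^ (σ.filter (· < v)).card * phi σ (σ.erase v)) •
            Finsupp.single (σ.erase v) (1 : 𝕜)
      else 0) := by
  simp [wbd]

lemma hspan_eq (H : Set (Finset V)) (m : ℕ) :
    hspan 𝕜 H m = Finsupp.supported 𝕜 𝕜 {σ | σ ∈ H ∧ σ.card = m} := by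
  rw [Finsupp.supported_eq_span_single, hspan]
  congr 1
  ext f
  constructor
  · rintro ⟨σ, hσ, hc, rfl⟩; exact ⟨σ, ⟨hσ, hc⟩, rfl⟩
  · rintro ⟨σ, ⟨hσ, hc⟩, rfl⟩; exact ⟨σ, hσ, hc, rfl⟩

end Aux

/-- the map `g_n : Σ_k a_k σ_k ↦ Σ_k (a_k / w(σ_k)) σ_k` is a (linear)
bijection from `D_n ∩ Ker ∂_n` onto `D_n ∩ Ker ∂_n^{φ_w}`, where `∂` is the unweighted
boundary (constant weight `1`), `∂^{φ_w}` the boundary for the weight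
`φ_w(σ,τ) = C·w(σ)/w(τ)`, and `D_n` is the span of the `n`-hyperedges of `H`. -/
theorem stmt18 {𝕜 V : Type*} [RCLike 𝕜] [LinearOrder V]
    (K : Set (Finset V)) (hfin : K.Finite)
    (hne : ∀ s ∈ K, s.Nonempty)
    (hdown : ∀ s ∈ K, ∀ t ⊆ s, t.Nonempty → t ∈ K)
    (w : Finset V → ℝ) (hw : ∀ s ∈ K, 0 < w s)
    (C : ℝ) (hC : 0 < C)
    (H : Set (Finset V)) (hH : H ⊆ K)
    (hDelta : K = {t | t.Nonempty ∧ ∃ s ∈ H, t ⊆ s})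
    (n : ℕ) :
    Set.BijOn (gmap 𝕜 w)
      ((hspan 𝕜 H (n + 1) ⊓ LinearMap.ker (wbd 𝕜 fun _ _ => (1 : 𝕜)) :
          Submodule 𝕜 (Finset V →₀ 𝕜)) : Set (Finset V →₀ 𝕜))
      ((hspan 𝕜 H (n + 1) ⊓
          LinearMap.ker (wbd 𝕜 fun σ τ => ((C * w σ / w τ : ℝ) : 𝕜)) :
          Submodule 𝕜 (Finset V →₀ 𝕜)) : Set (Finset V →₀ 𝕜)) := by
  classical
  set S : Set (Finset V) := {σ | σ ∈ H ∧ σ.card = n + 1} with hS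
  have hSK : S ⊆ K := fun σ hσ => hH hσ.1
  -- erases of K-simplices lie in K
  have herase : ∀ σ ∈ K, 2 ≤ σ.card → ∀ v ∈ σ, σ.erase v ∈ K := by
    intro σ hσ hcard v hv
    refine hdown σ hσ _ (Finset.erase_subset _ _) ?_
    rw [← Finset.card_pos, Finset.card_erase_of_mem hv]
    omega
  have hwK : ∀ σ ∈ K, ((w σ : ℝ) : 𝕜) ≠ 0 := by
    intro σ hσ
    simpa using (hw σ hσ).ne'
  -- the commutation relation on singles
  have comm_single : ∀ σ ∈ K,
      wbd 𝕜 (fun σ τ => ((C * w σ / w τ : ℝ) : 𝕜)) (gmap 𝕜 w (Finsupp.single σ 1))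
        = ((C : ℝ) : 𝕜) • gmap 𝕜 w (wbd 𝕜 (fun _ _ => (1 : 𝕜)) (Finsupp.single σ 1)) := by
    intro σ hσ
    by_cases hcard : 2 ≤ σ.card
    · rw [gmap_single, one_smul, map_smul, wbd_single, one_smul, wbd_single, one_smul]
      simp only [hcard, if_true]
      rw [map_sum, Finset.smul_sum, Finset.smul_sum]
      refine Finset.sum_congr rfl fun v hv => ?_
      have hτK : σ.erase v ∈ K := herase σ hσ hcard v hv
      rw [map_smul, gmap_single, one_smul]
      rw [smul_smul, smul_smul, smul_smul]
      congr 1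
      have h1 : ((w σ : ℝ) : 𝕜) ≠ 0 := hwK σ hσ
      have h2 : ((w (σ.erase v) : ℝ) : 𝕜) ≠ 0 := hwK _ hτK
      push_cast [RCLike.ofReal_div, RCLike.ofReal_mul]
      field_simp
    · simp [gmap_single, wbd_single, hcard]
  -- commutation on hspan
  have comm : ∀ f ∈ hspan 𝕜 H (n + 1),
      wbd 𝕜 (fun σ τ => ((C * w σ / w τ : ℝ) : 𝕜)) (gmap 𝕜 w f)
        = ((C : ℝ) : 𝕜) • gmap 𝕜 w (wbd 𝕜 (fun _ _ => (1 : 𝕜)) f) := by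
    intro f hf
    induction hf using Submodule.span_induction with
    | mem x hx =>
      obtain ⟨σ, hσ, hc, rfl⟩ := hx
      exact comm_single σ (hH hσ)
    | zero => simp
    | add x y hx hy ihx ihy =>
      rw [map_add, map_add, ihx, ihy, map_add, map_add, smul_add]
    | smul a x hx ih => rw [map_smul, map_smul, ih, map_smul, map_smul, smul_comm]
  -- gmap and ginv preserve hspan
  have hpres : ∀ (u : Finset V → ℝ) (f : Finset V →₀ 𝕜), f ∈ hspan 𝕜 H (n + 1) →
      gmap 𝕜 u f ∈ hspan 𝕜 H (n + 1) := by
    intro u f hf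
    induction hf using Submodule.span_induction with
    | mem x hx =>
      obtain ⟨σ, hσ, hc, rfl⟩ := hx
      rw [gmap_single, one_smul]
      exact Submodule.smul_mem _ _ (Submodule.subset_span ⟨σ, hσ, hc, rfl⟩)
    | zero => simp
    | add x y hx hy ihx ihy => rw [map_add]; exact add_mem ihx ihy
    | smul a x hx ih => rw [map_smul]; exact Submodule.smul_mem _ _ ih
  -- members of hspan are supported on S
  have hsupp : ∀ f : Finset V →₀ 𝕜, f ∈ hspan 𝕜 H (n + 1) → ∀ τ, f τ ≠ 0 → τ ∈ S := by
    intro f hf τ hτ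
    rw [hspan_eq, Finsupp.mem_supported] at hf
    exact hf (Finsupp.mem_support_iff.2 hτ)
  -- unweighted boundary of hspan members is supported on K
  have hbsupp : ∀ f ∈ hspan 𝕜 H (n + 1),
      ∀ τ, (wbd 𝕜 (fun _ _ => (1 : 𝕜)) f) τ ≠ 0 → τ ∈ K := by
    intro f hf
    have : wbd 𝕜 (fun _ _ => (1 : 𝕜)) f ∈ Finsupp.supported 𝕜 𝕜 K := by
      induction hf using Submodule.span_induction with
      | mem x hx =>
        obtain ⟨σ, hσ, hc, rfl⟩ := hx
        rw [wbd_single, one_smul]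
        by_cases hcard : 2 ≤ σ.card
        · simp only [hcard, if_true]
          refine Submodule.sum_mem _ fun v hv => Submodule.smul_mem _ _ ?_
          rw [Finsupp.mem_supported, Finsupp.support_single_ne_zero _ one_ne_zero]
          simpa using herase σ (hH hσ) hcard v hv
        · simp [hcard]
      | zero => simp
      | add x y hx hy ihx ihy => rw [map_add]; exact add_mem ihx ihy
      | smul a x hx ih => rw [map_smul]; exact Submodule.smul_mem _ _ ih
    intro τ hτ
    exact (Finsupp.mem_supported 𝕜 _).1 this (Finsupp.mem_support_iff.2 hτ)
  -- gmap is injective on chains supported in K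
  have hinj0 : ∀ x : Finsupp (Finset V) 𝕜, (∀ τ, x τ ≠ 0 → τ ∈ K) →
      gmap 𝕜 w x = 0 → x = 0 := by
    intro x hx h0
    ext τ
    by_contra hτ
    have hτK := hx τ hτ
    have : gmap 𝕜 w x τ = 0 := by rw [h0]; rfl
    rw [gmap_apply] at this
    rcases mul_eq_zero.1 this with h | h
    · exact hwK τ hτK (inv_eq_zero.1 h)
    · exact hτ h
  have hCne : ((C : ℝ) : 𝕜) ≠ 0 := by simpa using hC.ne'
  constructor
  · -- MapsTo
    rintro f ⟨hf1, hf2⟩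
    rw [SetLike.mem_coe, LinearMap.mem_ker] at hf2
    refine ⟨hpres w f hf1, ?_⟩
    rw [SetLike.mem_coe, LinearMap.mem_ker, comm f hf1, hf2, map_zero, smul_zero]
  constructor
  · -- InjOn
    rintro f ⟨hf1, _⟩ f' ⟨hf1', _⟩ heq
    ext τ
    by_cases hτ : τ ∈ S
    · have hwτ : ((w τ : ℝ) : 𝕜) ≠ 0 := hwK τ (hSK hτ)
      have : gmap 𝕜 w f τ = gmap 𝕜 w f' τ := DFunLike.congr_fun heq τ
      rw [gmap_apply, gmap_apply] at this
      exact mul_left_cancel₀ (inv_ne_zero hwτ) this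
    · have h1 : f τ = 0 := by
        by_contra h; exact hτ (hsupp f hf1 τ h)
      have h2 : f' τ = 0 := by
        by_contra h; exact hτ (hsupp f' hf1' τ h)
      rw [h1, h2]
  · -- SurjOn
    rintro h ⟨hh1, hh2⟩
    rw [SetLike.mem_coe, LinearMap.mem_ker] at hh2
    set f : Finset V →₀ 𝕜 := gmap 𝕜 (fun σ => (w σ)⁻¹) h with hfdef
    have hfspan : f ∈ hspan 𝕜 H (n + 1) := hpres _ h hh1
    have hgf : gmap 𝕜 w f = h := by
      ext τ
      rw [gmap_apply, hfdef, gmap_apply]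
      by_cases hτ : τ ∈ S
      · have hwτ : ((w τ : ℝ) : 𝕜) ≠ 0 := hwK τ (hSK hτ)
        rw [RCLike.ofReal_inv, inv_inv, ← mul_assoc, inv_mul_cancel₀ hwτ, one_mul]
      · have h1 : h τ = 0 := by
          by_contra hc; exact hτ (hsupp h hh1 τ hc)
        rw [h1, mul_zero, mul_zero]
    have hker : wbd 𝕜 (fun _ _ => (1 : 𝕜)) f = 0 := by
      have h0 : ((C : ℝ) : 𝕜) • gmap 𝕜 w (wbd 𝕜 (fun _ _ => (1 : 𝕜)) f) = 0 := by
        rw [← comm f hfspan, hgf, hh2]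
      have h1 : gmap 𝕜 w (wbd 𝕜 (fun _ _ => (1 : 𝕜)) f) = 0 :=
        (smul_eq_zero.1 h0).resolve_left hCne
      exact hinj0 _ (hbsupp f hfspan) h1
    exact ⟨f, ⟨hfspan, by rwa [SetLike.mem_coe, LinearMap.mem_ker]⟩, hgf⟩
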